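/- Let V be a complex vector space of even dimension, W a finite-dimensional vector space with a nondegenerate quadratic form q of the stated kernel-dichotomy type making (V, W, q) a k-symplectic space, and suppose additionally the structure is real with q of real signature (r,s), r > 0. Then the underlying real vector space V_ℝ carries a nontrivial structure of a Cl_{r−1,s}-module. -/

import Mathlib

set_option synthInstance.maxHeartbeats 400000
set_option maxHeartbeats 800000

open Module LinearMap

/-- The standard real quadratic form of signature `(r, s)` (`r` minuses, `s`
pluses) on `ℝ^{r+s}`. -/
noncomputable def signQF (r s : ℕ) : QuadraticForm ℝ (Fin (r + s) → ℝ) :=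
  QuadraticMap.weightedSumSquares ℝ (fun i : Fin (r + s) => if (i : ℕ) < r then (-1 : ℝ) else 1)

/-- The real Clifford algebra `Cl_{r,s}`. -/
noncomputable abbrev CliffordRS (r s : ℕ) := CliffordAlgebra (signQF r s)

open scoped TensorProduct

section StmtAux


lemma stmt15_tmul_one_inj (VR : Type*) [AddCommGroup VR] [Module ℝ VR] :
    Function.Injective (fun v : VR => (1 : ℂ) ⊗ₜ[ℝ] v) := by
  have : Function.LeftInverse
      (TensorProduct.lift ((LinearMap.lsmul ℝ VR).comp Complex.reLm))
      (fun v : VR => (1 : ℂ) ⊗ₜ[ℝ] v) := by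
    intro v; simp
  exact this.injective

lemma stmt15_keyLA {VC : Type*} [AddCommGroup VC] [Module ℂ VC] [FiniteDimensional ℂ VC]
    (m : ℕ) (hdim : finrank ℂ VC = 2 * m) (F : VC →ₗ[ℂ] VC) (lam : ℂ) (hlam : lam ≠ 0)
    (h1 : finrank ℂ (ker (F - lam • 1)) = m)
    (h2 : finrank ℂ (ker (F + lam • 1)) = m) :
    F ∘ₗ F = (lam * lam) • 1 := by
  set K₁ := ker (F - lam • 1)
  set K₂ := ker (F + lam • 1)
  have hmem1 : ∀ v ∈ K₁, F v = lam • v := by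
    intro v hv
    have := (LinearMap.mem_ker.mp hv)
    simpa [sub_eq_zero] using this
  have hmem2 : ∀ v ∈ K₂, F v = -(lam • v) := by
    intro v hv
    have := (LinearMap.mem_ker.mp hv)
    simp only [LinearMap.add_apply, LinearMap.smul_apply, Module.End.one_apply] at this
    linear_combination (norm := module) this
  have hinf : K₁ ⊓ K₂ = ⊥ := by
    rw [Submodule.eq_bot_iff]
    intro v hv
    have h1v := hmem1 v hv.1
    have h2v := hmem2 v hv.2
    have : (2 * lam) • v = 0 := by
      rw [h1v] at h2v
      have h := add_eq_zero_iff_eq_neg.mpr h2v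
      rw [← h]; module
    have h2l : (2 : ℂ) * lam ≠ 0 := by simp [hlam]
    simpa [h2l] using this
  have hsup : K₁ ⊔ K₂ = ⊤ := by
    apply Submodule.eq_top_of_finrank_eq
    have := Submodule.finrank_sup_add_finrank_inf_eq K₁ K₂
    rw [hinf] at this
    simp only [finrank_bot, add_zero] at this
    omega
  have hker : ∀ v : VC, (F ∘ₗ F - (lam * lam) • 1) v = 0 := by
    have hle : K₁ ⊔ K₂ ≤ ker (F ∘ₗ F - (lam * lam) • 1) := by
      apply sup_le
      · intro v hv
        have := hmem1 v hv
        simp only [LinearMap.mem_ker, LinearMap.sub_apply, LinearMap.comp_apply,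
          LinearMap.smul_apply, Module.End.one_apply, this, map_smul, smul_smul, sub_self]
      · intro v hv
        have := hmem2 v hv
        simp only [LinearMap.mem_ker, LinearMap.sub_apply, LinearMap.comp_apply,
          LinearMap.smul_apply, Module.End.one_apply, this, map_neg, map_smul, smul_smul]
        module
    intro v
    exact LinearMap.mem_ker.mp (hle (hsup ▸ Submodule.mem_top))
  ext v
  have := hker v
  simpa [sub_eq_zero] using this

variable {VR : Type*} [AddCommGroup VR] [Module ℝ VR]

lemma stmt15_bilin_ext {B C : LinearMap.BilinForm ℂ (ℂ ⊗[ℝ] VR)}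
    (h : ∀ (a : ℂ) (v : VR) (b : ℂ) (w : VR), B (a ⊗ₜ v) (b ⊗ₜ w) = C (a ⊗ₜ v) (b ⊗ₜ w)) :
    B = C := by
  apply LinearMap.ext; intro x
  apply LinearMap.ext; intro y
  induction x using TensorProduct.induction_on with
  | zero => simp
  | tmul a v =>
    induction y using TensorProduct.induction_on with
    | zero => simp
    | tmul b w => exact h a v b w
    | add y₁ y₂ ih₁ ih₂ => simp [map_add, ih₁, ih₂]
  | add x₁ x₂ ih₁ ih₂ => simp [map_add, ih₁ , ih₂]

lemma stmt15_baseChange_zero :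
    (LinearMap.BilinForm.baseChange ℂ (0 : LinearMap.BilinForm ℝ VR)) = 0 := by
  apply stmt15_bilin_ext; intro a v b w; simp

lemma stmt15_nondeg [FiniteDimensional ℝ VR] (B : LinearMap.BilinForm ℝ VR)
    (h : LinearMap.ker (LinearMap.BilinForm.baseChange ℂ B) = ⊥) : B.Nondegenerate := by
  apply LinearMap.BilinForm.Nondegenerate.ofSeparatingLeft
  intro v hv
  have hmem : ((1:ℂ) ⊗ₜ[ℝ] v) ∈ LinearMap.ker (LinearMap.BilinForm.baseChange ℂ B) := by
    rw [LinearMap.mem_ker]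
    apply LinearMap.ext; intro y
    induction y using TensorProduct.induction_on with
    | zero => simp
    | tmul b w => simp [hv w]
    | add y₁ y₂ ih₁ ih₂ => simp [map_add, ih₁, ih₂]
  rw [h, Submodule.mem_bot] at hmem
  exact stmt15_tmul_one_inj VR (by simpa using hmem)

lemma stmt15_bridge (B₁ B₂ : LinearMap.BilinForm ℝ VR) (E : VR →ₗ[ℝ] VR)
    (hE : ∀ v w, B₁ (E v) w = B₂ v w) (x y : ℝ) :
    LinearMap.BilinForm.baseChange ℂ (B₂ - x • B₁) +
      Complex.I • LinearMap.BilinForm.baseChange ℂ ((-y) • B₁)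
    = (LinearMap.BilinForm.baseChange ℂ B₁) ∘ₗ
        (E.baseChange ℂ - (x + y * Complex.I) • 1) := by
  apply stmt15_bilin_ext; intro a v b w
  simp only [LinearMap.add_apply, LinearMap.smul_apply, LinearMap.comp_apply,
    LinearMap.sub_apply, Module.End.one_apply, LinearMap.baseChange_tmul,
    map_sub, map_smul, LinearMap.BilinForm.baseChange_tmul, hE v w,
    LinearMap.smul_apply, smul_eq_mul, Complex.real_smul]
  push_cast
  ring

lemma stmt15_sq_eq [FiniteDimensional ℝ VR] (n : ℕ) (hdim : finrank ℝ VR = 4 * n)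
    (B₁ B₂ : LinearMap.BilinForm ℝ VR)
    (hB₁ : LinearMap.ker (LinearMap.BilinForm.baseChange ℂ B₁) = ⊥)
    (E : VR →ₗ[ℝ] VR) (hE : ∀ v w, B₁ (E v) w = B₂ v w)
    (c : ℝ) (hc : c ≠ 0)
    (hker : ∀ x y : ℝ, x * x - y * y = c → x * y = 0 →
      finrank ℂ (LinearMap.ker
        (LinearMap.BilinForm.baseChange ℂ (B₂ - x • B₁) +
          Complex.I • LinearMap.BilinForm.baseChange ℂ ((-y) • B₁))) = 2 * n) :
    E ∘ₗ E = c • LinearMap.id := by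
  obtain ⟨x, y, hxy1, hxy2⟩ : ∃ x y : ℝ, x * x - y * y = c ∧ x * y = 0 := by
    rcases le_or_gt 0 c with h | h
    · exact ⟨Real.sqrt c, 0, by rw [Real.mul_self_sqrt h]; ring, by ring⟩
    · exact ⟨0, Real.sqrt (-c), by rw [Real.mul_self_sqrt (by linarith)]; ring, by ring⟩
  set lam : ℂ := x + y * Complex.I with hlam_def
  have hlam_sq : lam * lam = (c : ℂ) := by
    rw [hlam_def, ← hxy1]
    have : (x : ℂ) * y = 0 := by exact_mod_cast hxy2
    push_cast
    ring_nf
    rw [Complex.I_sq]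
    linear_combination (2 * Complex.I) * this
  have hlam_ne : lam ≠ 0 := by
    intro h
    have : (c : ℂ) = 0 := by rw [← hlam_sq, h, mul_zero]
    exact hc (by exact_mod_cast this)
  have hkl : ∀ x' y' : ℝ, x' * x' - y' * y' = c → x' * y' = 0 →
      finrank ℂ (LinearMap.ker (E.baseChange ℂ - ((x' : ℂ) + y' * Complex.I) • 1)) = 2 * n := by
    intro x' y' h1 h2
    have hb := stmt15_bridge B₁ B₂ E hE x' y'
    have := hker x' y' h1 h2
    rw [hb] at this
    rwa [LinearMap.ker_comp_of_ker_eq_bot _ hB₁] at this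
  have h1 : finrank ℂ (LinearMap.ker (E.baseChange ℂ - lam • 1)) = 2 * n :=
    hkl x y hxy1 hxy2
  have h2 : finrank ℂ (LinearMap.ker (E.baseChange ℂ + lam • 1)) = 2 * n := by
    have := hkl (-x) (-y) (by push_cast; linarith [hxy1]) (by rw [neg_mul_neg]; exact hxy2)
    have heq : ((-x : ℝ) : ℂ) + (-y : ℝ) * Complex.I = -lam := by
      rw [hlam_def]; push_cast; ring
    rw [heq] at this
    have hE2 : E.baseChange ℂ - (-lam) • 1 = E.baseChange ℂ + lam • 1 := by module
    rwa [hE2] at this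
  have hdimC : finrank ℂ (ℂ ⊗[ℝ] VR) = 2 * (2 * n) := by
    rw [Module.finrank_baseChange, hdim]; ring
  have hFF := stmt15_keyLA (2 * n) hdimC (E.baseChange ℂ) lam hlam_ne h1 h2
  apply LinearMap.ext; intro v
  apply stmt15_tmul_one_inj VR
  have happ := LinearMap.congr_fun hFF ((1 : ℂ) ⊗ₜ[ℝ] v)
  simp only [LinearMap.comp_apply, LinearMap.baseChange_tmul, LinearMap.smul_apply,
    Module.End.one_apply] at happ
  simp only [LinearMap.comp_apply, LinearMap.smul_apply, LinearMap.id_apply]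
  rw [happ, hlam_sq]
  rw [← Complex.coe_algebraMap, algebraMap_smul, TensorProduct.tmul_smul]


lemma stmt15_quad_expand {ΩR : Type*} [AddCommGroup ΩR] [Module ℝ ΩR]
    (q : QuadraticForm ℝ ΩR) (a b : ΩR) (t : ℝ) :
    q (a + t • b) = q a + (t * t) * q b + t * QuadraticMap.polar q a b := by
  have h : QuadraticMap.polar q a (t • b) = q (a + t • b) - q a - q (t • b) := rfl
  have h2 := QuadraticMap.polar_smul_right q t a b
  rw [h] at h2
  have h3 := QuadraticMap.map_smul q t b
  rw [h3] at h2
  simp only [smul_eq_mul] at h2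
  linarith

lemma stmt15_polar_isom {ΩR : Type*} [AddCommGroup ΩR] [Module ℝ ΩR]
    {M₂ : Type*} [AddCommGroup M₂] [Module ℝ M₂]
    {Q₁ : QuadraticForm ℝ ΩR} {Q₂ : QuadraticForm ℝ M₂}
    (f : Q₁.IsometryEquiv Q₂) (a b : ΩR) :
    QuadraticMap.polar Q₂ (f a) (f b) = QuadraticMap.polar Q₁ a b := by
  unfold QuadraticMap.polar
  rw [← map_add f, f.map_app, f.map_app, f.map_app]

lemma stmt15_polar_wss {ι : Type*} [Fintype ι] (w : ι → ℝ) (u v : ι → ℝ) :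
    QuadraticMap.polar (QuadraticMap.weightedSumSquares ℝ w) u v
      = ∑ i, w i * (2 * u i * v i) := by
  unfold QuadraticMap.polar
  simp only [QuadraticMap.weightedSumSquares_apply, Pi.add_apply, smul_eq_mul]
  rw [← Finset.sum_sub_distrib, ← Finset.sum_sub_distrib]
  apply Finset.sum_congr rfl
  intro i _
  ring

lemma stmt15_signQF_apply (r s : ℕ) (u : Fin (r + s) → ℝ) :
    signQF r s u = ∑ i : Fin (r + s), (if (i : ℕ) < r then (-1 : ℝ) else 1) • (u i * u i) :=
  QuadraticMap.weightedSumSquares_apply _ _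

lemma stmt15_polar_signQF (r s : ℕ) (u v : Fin (r + s) → ℝ) :
    QuadraticMap.polar (signQF r s) u v
      = ∑ i : Fin (r + s), (if (i : ℕ) < r then (-1 : ℝ) else 1) * (2 * u i * v i) :=
  stmt15_polar_wss _ u v

lemma stmt15_qnd {ΩR : Type*} [AddCommGroup ΩR] [Module ℝ ΩR] (r s : ℕ)
    (qR : QuadraticForm ℝ ΩR) (φ : qR.IsometryEquiv (signQF r s)) :
    ∀ ω : ΩR, ω ≠ 0 → ∃ z, QuadraticMap.polar qR ω z ≠ 0 := by
  intro ω hω0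
  have hφω : φ ω ≠ 0 := by
    intro h
    exact hω0 (φ.toLinearEquiv.map_eq_zero_iff.mp h)
  obtain ⟨i, hi⟩ := Function.ne_iff.mp hφω
  refine ⟨φ.symm (Pi.single i 1), ?_⟩
  have heq : QuadraticMap.polar qR ω (φ.symm (Pi.single i 1))
      = QuadraticMap.polar (signQF r s) (φ ω) (Pi.single i 1) := by
    rw [← stmt15_polar_isom φ]
    congr 1
    exact (φ.toLinearEquiv.apply_symm_apply _)
  rw [heq, stmt15_polar_signQF]
  rw [Finset.sum_eq_single i]
  · simp only [Pi.single_eq_same, mul_one]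
    by_cases h : (i : ℕ) < r
    · simp only [if_pos h]
      intro hcon; apply hi; simp at hi ⊢; nlinarith [hcon]
    · simp only [if_neg h]
      intro hcon; apply hi; simp at hi ⊢; nlinarith [hcon]
  · intro j _ hj; simp [Pi.single_apply, hj]
  · simp

lemma stmt15_exists_basis {ΩR : Type*} [AddCommGroup ΩR] [Module ℝ ΩR] (r' s : ℕ)
    (qR : QuadraticForm ℝ ΩR) (φ : qR.IsometryEquiv (signQF (r' + 1) s)) :
    ∃ (ω₁ : ΩR) (g : (Fin (r' + s) → ℝ) →ₗ[ℝ] ΩR), qR ω₁ = -1 ∧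
      (∀ u, QuadraticMap.polar qR (g u) ω₁ = 0) ∧ ∀ u, qR (g u) = signQF r' s u := by
  have hcast : r' + s + 1 = r' + 1 + s := by omega
  set i₀ : Fin (r' + 1 + s) := ⟨0, by omega⟩ with hi₀
  set e₀ : Fin (r' + 1 + s) → ℝ := Pi.single i₀ 1 with he₀
  set L : (Fin (r' + s) → ℝ) →ₗ[ℝ] (Fin (r' + 1 + s) → ℝ) :=
    { toFun := fun u i => if h : (i : ℕ) = 0 then 0 else u ⟨(i : ℕ) - 1, by omega⟩
      map_add' := by
        intro a b; funext i; by_cases h : (i : ℕ) = 0 <;> simp only [h, ↓reduceDIte, Pi.add_apply, Pi.smul_apply, add_zero, smul_zero,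
          RingHom.id_apply]
      map_smul' := by
        intro c a; funext i; by_cases h : (i : ℕ) = 0 <;> simp only [h, ↓reduceDIte, Pi.add_apply, Pi.smul_apply, add_zero, smul_zero,
          RingHom.id_apply] } with hL
  have hL0 : ∀ u, L u i₀ = 0 := by intro u; simp [hL, hi₀]
  refine ⟨φ.symm e₀, φ.symm.toLinearEquiv.toLinearMap ∘ₗ L, ?_, ?_, ?_⟩
  · rw [φ.symm.map_app]
    rw [stmt15_signQF_apply]
    rw [Finset.sum_eq_single i₀]
    · simp [he₀, hi₀]
    · intro j _ hj; simp [he₀, Pi.single_apply, hj]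
    · simp
  · intro u
    have : QuadraticMap.polar qR (φ.symm (L u)) (φ.symm e₀)
        = QuadraticMap.polar (signQF (r' + 1) s) (L u) e₀ := stmt15_polar_isom φ.symm _ _
    simp only [LinearMap.comp_apply, LinearEquiv.coe_coe]
    show QuadraticMap.polar (⇑qR) (φ.symm (L u)) (φ.symm e₀) = 0
    rw [this, stmt15_polar_signQF]
    rw [Finset.sum_eq_single i₀]
    · rw [hL0 u]; ring
    · intro j _ hj; simp [he₀, Pi.single_apply, hj]
    · simp
  · intro u
    simp only [LinearMap.comp_apply, LinearEquiv.coe_coe]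
    show qR (φ.symm (L u)) = _
    rw [φ.symm.map_app]
    rw [stmt15_signQF_apply, stmt15_signQF_apply]
    rw [← Fintype.sum_equiv (finCongr hcast)
      (fun j => (if ((finCongr hcast j : Fin (r' + 1 + s)) : ℕ) < r' + 1 then (-1:ℝ) else 1) •
        (L u (finCongr hcast j) * L u (finCongr hcast j))) _ (fun j => rfl)]
    rw [Fin.sum_univ_succ]
    have h0 : ((finCongr hcast (0 : Fin (r' + s + 1))) : ℕ) = 0 := rfl
    have hz : L u (finCongr hcast 0) = 0 := by simp [hL]
    rw [hz]
    simp only [mul_zero, smul_zero, zero_add]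
    apply Finset.sum_congr rfl
    intro j _
    have hval : ((finCongr hcast j.succ : Fin (r' + 1 + s)) : ℕ) = (j : ℕ) + 1 := by simp
    have hLval : L u (finCongr hcast j.succ) = u j := by
      simp only [hL, LinearMap.coe_mk, AddHom.coe_mk]
      rw [dif_neg (by omega : ¬((finCongr hcast j.succ : Fin (r' + 1 + s)) : ℕ) = 0)]
      rfl
    rw [hLval, hval]
    norm_num
lemma stmt15_polarize {ΩR : Type*} [AddCommGroup ΩR] [Module ℝ ΩR]
    {VR : Type*} [AddCommGroup VR] [Module ℝ VR]
    (qR : QuadraticForm ℝ ΩR) (ω₁ : ΩR) (hqω₁ : qR ω₁ = -1)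
    (hnd : ∀ ω : ΩR, ω ≠ 0 → ∃ z, QuadraticMap.polar qR ω z ≠ 0)
    (A : ΩR →ₗ[ℝ] (VR →ₗ[ℝ] VR))
    (hsq : ∀ ω : ΩR, QuadraticMap.polar qR ω ω₁ = 0 → qR ω ≠ 0 →
      A ω ∘ₗ A ω = qR ω • LinearMap.id)
    (ω : ΩR) (hperp : QuadraticMap.polar qR ω ω₁ = 0) :
    A ω ∘ₗ A ω = qR ω • LinearMap.id := by
  by_cases hq0 : qR ω = 0
  swap
  · exact hsq ω hperp hq0
  by_cases hω0 : ω = 0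
  · rw [hω0]; simp
  have hpolar_self : QuadraticMap.polar qR ω₁ ω₁ = -2 := by
    rw [QuadraticMap.polar_self, hqω₁]; norm_num
  obtain ⟨z, hz⟩ := hnd ω hω0
  -- project z to the perpendicular complement of ω₁
  set y₀ : ΩR := z + (QuadraticMap.polar qR z ω₁ / 2) • ω₁ with hy₀
  have hy₀perp : QuadraticMap.polar qR y₀ ω₁ = 0 := by
    rw [hy₀, QuadraticMap.polar_add_left, QuadraticMap.polar_smul_left, hpolar_self]
    simp only [smul_eq_mul]; ring
  have hy₀pol : QuadraticMap.polar qR ω y₀ = QuadraticMap.polar qR ω z := by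
    rw [hy₀, QuadraticMap.polar_add_right, QuadraticMap.polar_smul_right,
      QuadraticMap.polar_comm qR ω ω₁] at *
    rw [hperp]; simp
  -- make it anisotropic if needed
  obtain ⟨y, hyperp, hyq, hypol⟩ : ∃ y : ΩR, QuadraticMap.polar qR y ω₁ = 0 ∧
      qR y ≠ 0 ∧ QuadraticMap.polar qR ω y ≠ 0 := by
    by_cases h : qR y₀ = 0
    · refine ⟨y₀ + ω, ?_, ?_, ?_⟩
      · rw [QuadraticMap.polar_add_left, hy₀perp, hperp]; ring
      · have hval : qR (y₀ + ω) = qR y₀ + qR ω + QuadraticMap.polar qR y₀ ω := by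
          have : QuadraticMap.polar qR y₀ ω = qR (y₀ + ω) - qR y₀ - qR ω := rfl
          linarith [this]
        rw [hval, h, hq0, QuadraticMap.polar_comm qR y₀ ω, hy₀pol]
        simpa using hz
      · rw [QuadraticMap.polar_add_right, hy₀pol, QuadraticMap.polar_self, hq0]
        simpa using hz
    · exact ⟨y₀, hy₀perp, h, by rw [hy₀pol]; exact hz⟩
  set p := QuadraticMap.polar qR ω y with hp
  set qy := qR y with hqy
  have hy2 : A y ∘ₗ A y = qy • LinearMap.id := hsq y hyperp hyq
  set U : VR →ₗ[ℝ] VR := A ω ∘ₗ A ω with hU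
  set G : VR →ₗ[ℝ] VR := A ω ∘ₗ A y + A y ∘ₗ A ω - p • LinearMap.id with hG
  have key : ∀ t : ℝ, t ≠ 0 → t * qy + p ≠ 0 → U + t • G = 0 := by
    intro t ht htp
    have hqval : qR (ω + t • y) = t * t * qy + t * p := by
      rw [stmt15_quad_expand, hq0]; ring
    have hqne : qR (ω + t • y) ≠ 0 := by
      rw [hqval]
      intro hcon
      apply htp
      have : t * (t * qy + p) = 0 := by ring_nf; linarith [hcon]
      rcases mul_eq_zero.mp this with h' | h'
      · exact absurd h' ht
      · exact h'
    have hperp' : QuadraticMap.polar qR (ω + t • y) ω₁ = 0 := by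
      rw [QuadraticMap.polar_add_left, QuadraticMap.polar_smul_left, hperp, hyperp]
      simp
    have h := hsq (ω + t • y) hperp' hqne
    rw [map_add, map_smul, hqval] at h
    have hgoal : U + t • G =
        (A ω + t • A y) ∘ₗ (A ω + t • A y) - (t * t * qy + t * p) • LinearMap.id := by
      simp only [hU, hG, LinearMap.add_comp, LinearMap.comp_add, LinearMap.smul_comp,
        LinearMap.comp_smul, hy2]
      module
    rw [hgoal, h, sub_self]
  -- two good parameters
  set t₀ : ℝ := -p / qy with ht₀
  have hgood : ∀ t : ℝ, t ≠ t₀ → t * qy + p ≠ 0 := by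
    intro t htne hcon
    apply htne
    rw [ht₀]
    field_simp
    linarith [hcon]
  set t₁ : ℝ := if t₀ = 1 then 2 else 1 with ht₁
  set t₂ : ℝ := if t₀ = -1 then -2 else -1 with ht₂
  have ht₁pos : 0 < t₁ := by rw [ht₁]; split <;> norm_num
  have ht₂neg : t₂ < 0 := by rw [ht₂]; split <;> norm_num
  have ht₁t₀ : t₁ ≠ t₀ := by
    rw [ht₁]; split
    · rename_i h; rw [h]; norm_num
    · rename_i h; intro hcon; exact h hcon.symm
  have ht₂t₀ : t₂ ≠ t₀ := by
    rw [ht₂]; split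
    · rename_i h; rw [h]; norm_num
    · rename_i h; intro hcon; exact h hcon.symm
  have h₁ := key t₁ (by linarith) (hgood t₁ ht₁t₀)
  have h₂ := key t₂ (by linarith) (hgood t₂ ht₂t₀)
  have hGsub : (t₁ - t₂) • G = 0 := by
    have e : (U + t₁ • G) - (U + t₂ • G) = 0 := by rw [h₁, h₂, sub_zero]
    rw [← e]; module
  have hGzero : G = 0 := by
    have hne : t₁ - t₂ ≠ 0 := by intro h; linarith
    rcases smul_eq_zero.mp hGsub with h | h
    · exact absurd h hne
    · exact h
  have hUzero : U = 0 := by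
    have := h₁
    rw [hGzero, smul_zero, add_zero] at this
    exact this
  rw [hUzero, hq0, zero_smul]

lemma stmt15_exists_A {VR : Type*} [AddCommGroup VR] [Module ℝ VR] [FiniteDimensional ℝ VR]
    {ΩR : Type*} [AddCommGroup ΩR] [Module ℝ ΩR]
    (embR : ΩR →ₗ[ℝ] LinearMap.BilinForm ℝ VR)
    (B₁ : LinearMap.BilinForm ℝ VR) (hB₁ : B₁.Nondegenerate) :
    ∃ A : ΩR →ₗ[ℝ] (VR →ₗ[ℝ] VR), ∀ ω v w, B₁ (A ω v) w = embR ω v w := by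
  set D := B₁.toDual hB₁ with hD
  refine ⟨{ toFun := fun ω => D.symm.toLinearMap ∘ₗ embR ω
            map_add' := by intro a b; simp [map_add, LinearMap.comp_add]
            map_smul' := by intro c a; simp [map_smul, LinearMap.comp_smul] }, ?_⟩
  intro ω v w
  have h : D (D.symm (embR ω v)) = embR ω v := D.apply_symm_apply _
  show B₁ (D.symm (embR ω v)) w = embR ω v w
  conv_rhs => rw [← h]
  rfl

end StmtAux

/-- let `(V, Ω, q)` be a real `k`-symplectic vector space, i.e. `V` is
the complexification of `V_ℝ` (of real dimension `4n`), `Ω` the complexification of a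
real space `Ω_ℝ` of 2-forms on `V_ℝ`, the complexified forms
`ω₁ ⊗ 1 + i (ω₂ ⊗ 1)` satisfy the `k`-symplectic kernel dichotomy with respect to
the complexified quadratic form (`q(ω₁ + iω₂) = q ω₁ - q ω₂ + i·2q(ω₁,ω₂)`), and
`q` has real signature `(r, s)` with `r > 0`.  Then `V_ℝ` is a (nontrivial, unital)
module over `Cl_{r-1,s}`. -/
theorem stmt15 (VR : Type*) [AddCommGroup VR] [Module ℝ VR] [FiniteDimensional ℝ VR]
    (ΩR : Type*) [AddCommGroup ΩR] [Module ℝ ΩR] [FiniteDimensional ℝ ΩR]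
    (n k r s : ℕ) (hn : 0 < n) (hr : 0 < r) (hrs : r + s = k)
    (hdim : finrank ℝ VR = 4 * n)
    (embR : ΩR →ₗ[ℝ] LinearMap.BilinForm ℝ VR) (hemb : Function.Injective embR)
    (halt : ∀ ω : ΩR, (embR ω).IsAlt)
    (hk : finrank ℝ ΩR = k)
    (qR : QuadraticForm ℝ ΩR)
    (hsig : Nonempty (QuadraticMap.IsometryEquiv qR (signQF r s)))
    (hdich : ∀ ω₁ ω₂ : ΩR, ¬(ω₁ = 0 ∧ ω₂ = 0) →
      ((qR ω₁ - qR ω₂ = 0 ∧ QuadraticMap.polar qR ω₁ ω₂ = 0) →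
        finrank ℂ (LinearMap.ker
          (LinearMap.BilinForm.baseChange ℂ (embR ω₁) +
            Complex.I • LinearMap.BilinForm.baseChange ℂ (embR ω₂))) = 2 * n) ∧
      (¬(qR ω₁ - qR ω₂ = 0 ∧ QuadraticMap.polar qR ω₁ ω₂ = 0) →
        LinearMap.ker
          (LinearMap.BilinForm.baseChange ℂ (embR ω₁) +
            Complex.I • LinearMap.BilinForm.baseChange ℂ (embR ω₂)) = ⊥)) :
    Nonempty (CliffordRS (r - 1) s →ₐ[ℝ] Module.End ℝ VR) := by
  obtain ⟨r', rfl⟩ : ∃ r', r = r' + 1 := ⟨r - 1, by omega⟩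
  obtain ⟨φ⟩ := hsig
  obtain ⟨ω₁, g, hqω₁, hgperp, hgval⟩ := stmt15_exists_basis r' s qR φ
  have hω₁ne : ω₁ ≠ 0 := by
    intro h
    rw [h, map_zero] at hqω₁
    norm_num at hqω₁
  have hB₁c : LinearMap.ker (LinearMap.BilinForm.baseChange ℂ (embR ω₁)) = ⊥ := by
    have h := (hdich ω₁ 0 (by tauto)).2 (by
      rw [map_zero, sub_zero, hqω₁]
      intro hcon
      norm_num at hcon)
    rwa [map_zero, stmt15_baseChange_zero, smul_zero, add_zero] at h
  have hB₁ : (embR ω₁).Nondegenerate := stmt15_nondeg _ hB₁c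
  obtain ⟨A, hArel⟩ := stmt15_exists_A embR (embR ω₁) hB₁
  have hpolar_self : QuadraticMap.polar qR ω₁ ω₁ = -2 := by
    rw [QuadraticMap.polar_self, hqω₁]; norm_num
  have hsq : ∀ ω : ΩR, QuadraticMap.polar qR ω ω₁ = 0 → qR ω ≠ 0 →
      A ω ∘ₗ A ω = qR ω • LinearMap.id := by
    intro ω hperp hq0
    apply stmt15_sq_eq n hdim (embR ω₁) (embR ω) hB₁c (A ω) (hArel ω) (qR ω) hq0
    intro x y h1 h2
    have hsub : embR ω - x • embR ω₁ = embR (ω - x • ω₁) := by rw [map_sub, map_smul]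
    have hsmul : (-y) • embR ω₁ = embR ((-y) • ω₁) := by rw [map_smul]
    rw [hsub, hsmul]
    have hne : ¬(ω - x • ω₁ = 0 ∧ (-y) • ω₁ = 0) := by
      rintro ⟨ha, hb⟩
      have hy : y = 0 := by
        rcases smul_eq_zero.mp hb with h | h
        · linarith [neg_eq_zero.mp h]
        · exact absurd h hω₁ne
      have hωeq : ω = x • ω₁ := by rwa [sub_eq_zero] at ha
      have hqω : qR ω = -(x * x) := by
        rw [hωeq, QuadraticMap.map_smul, hqω₁, smul_eq_mul]; ring
      rw [hy] at h1
      apply hq0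
      nlinarith [h1, hqω]
    have hq1 : qR (ω - x • ω₁) = qR ω - x * x := by
      have hexp := stmt15_quad_expand qR ω ω₁ (-x)
      rw [sub_eq_add_neg, ← neg_smul, hexp, hqω₁, hperp]; ring
    have hq2 : qR ((-y) • ω₁) = -(y * y) := by
      rw [QuadraticMap.map_smul, hqω₁, smul_eq_mul]; ring
    have hpq : QuadraticMap.polar qR (ω - x • ω₁) ((-y) • ω₁) = 0 := by
      rw [QuadraticMap.polar_smul_right, QuadraticMap.polar_sub_left,
        QuadraticMap.polar_smul_left, hpolar_self, hperp]
      simp only [smul_eq_mul]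
      linear_combination -2 * h2
    exact (hdich _ _ hne).1 ⟨by rw [hq1, hq2]; linarith [h1], hpq⟩
  have hsqall := stmt15_polarize qR ω₁ hqω₁ (stmt15_qnd (r' + 1) s qR φ) A hsq
  set f : (Fin (r' + s) → ℝ) →ₗ[ℝ] (VR →ₗ[ℝ] VR) := A ∘ₗ g with hf_def
  have hf : ∀ u, f u * f u = algebraMap ℝ (Module.End ℝ VR) (signQF r' s u) := by
    intro u
    have h := hsqall (g u) (hgperp u)
    rw [hgval u] at h
    show A (g u) * A (g u) = _
    rw [Module.End.mul_eq_comp, h]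
    ext v
    simp [Module.algebraMap_end_apply]
  exact ⟨CliffordAlgebra.lift (signQF r' s) ⟨f, hf⟩⟩
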